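/- Let n ≥ 3 be an integer, ν ≥ (n−2)/2 real, let k ≥ 0 be an integer, and let σ > n/2 + k. For r, s > 0 let F_{r,s}(λ) = (rs)^{−(n−2)/2} J_ν(λr) J_ν(λs), a smooth function of λ > 0. Then there exists a constant C > 0 (depending only on n, ν, k, σ) such that for every 0 < λ ≤ 1, (∫₀^∞ ∫₀^∞ |(d/dλ)^k F_{r,s}(λ)|² (1+r)^{−2σ} (1+s)^{−2σ} (rs)^{n−1} dr ds)^{1/2} ≤ C λ^{n−2−k}. -/

import Mathlib

open MeasureTheory Real Set

/-- The Bessel function of the first kind of order `ν`, defined by its power series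
(with the convention `1/Γ = 0` at the poles of `Γ`). -/
noncomputable def besselJ (ν : ℝ) (x : ℝ) : ℝ :=
  ∑' k : ℕ, ((-1 : ℝ) ^ k / ((k.factorial : ℝ) * Real.Gamma (ν + (k : ℝ) + 1))) *
    (x / 2) ^ (2 * (k : ℝ) + ν)


namespace BesselProof
open Polynomial

noncomputable def a (ν : ℝ) (m : ℕ) : ℝ :=
  (-1 : ℝ) ^ m / ((m.factorial : ℝ) * Real.Gamma (ν + m + 1))

noncomputable def d (ν : ℝ) (j m : ℕ) : ℝ :=
  ((m + j).descFactorial j : ℝ) * a ν (m + j)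

noncomputable def G (ν : ℝ) (j : ℕ) (t : ℝ) : ℝ := ∑' m : ℕ, d ν j m * t ^ m

variable {ν : ℝ}

lemma gamma_pos (hν : 0 < ν) (m : ℕ) : 0 < Real.Gamma (ν + m + 1) :=
  Real.Gamma_pos_of_pos (by positivity)

lemma gamma_ge (hν : 0 < ν) (m : ℕ) :
    (m.factorial : ℝ) * Real.Gamma (ν + 1) ≤ Real.Gamma (ν + m + 1) := by
  induction m with
  | zero => simp
  | succ m ih =>
    have h1 : Real.Gamma (ν + (m+1 : ℕ) + 1) = (ν + m + 1) * Real.Gamma (ν + m + 1) := by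
      rw [show ν + ((m+1 : ℕ) : ℝ) + 1 = (ν + m + 1) + 1 by push_cast; ring]
      exact Real.Gamma_add_one (by positivity)
    rw [h1]
    have h2 : ((m+1 : ℕ).factorial : ℝ) = (m + 1 : ℝ) * m.factorial := by
      rw [Nat.factorial_succ]; push_cast; ring
    rw [h2]
    have h3 : (m + 1 : ℝ) ≤ ν + m + 1 := by linarith
    have h4 : (0:ℝ) < m + 1 := by positivity
    calc (m + 1 : ℝ) * m.factorial * Real.Gamma (ν + 1)
        = (m + 1 : ℝ) * ((m.factorial : ℝ) * Real.Gamma (ν + 1)) := by ring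
      _ ≤ (m + 1 : ℝ) * Real.Gamma (ν + m + 1) := by
          exact mul_le_mul_of_nonneg_left ih (by positivity)
      _ ≤ (ν + m + 1) * Real.Gamma (ν + m + 1) := by
          exact mul_le_mul_of_nonneg_right h3 (gamma_pos hν m).le

lemma abs_a_le (hν : 0 < ν) (m : ℕ) :
    |a ν m| ≤ 1 / ((m.factorial : ℝ) * m.factorial * Real.Gamma (ν + 1)) := by
  have hg := gamma_pos hν m
  have hfac : (0:ℝ) < m.factorial := by positivity
  have : |a ν m| = 1 / ((m.factorial : ℝ) * Real.Gamma (ν + m + 1)) := by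
    rw [a, abs_div, abs_pow, abs_neg, abs_one, one_pow, abs_of_pos (by positivity)]
  rw [this]
  apply one_div_le_one_div_of_le (by positivity)
  calc (m.factorial : ℝ) * m.factorial * Real.Gamma (ν + 1)
      = (m.factorial : ℝ) * ((m.factorial : ℝ) * Real.Gamma (ν + 1)) := by ring
    _ ≤ (m.factorial : ℝ) * Real.Gamma (ν + m + 1) :=
        mul_le_mul_of_nonneg_left (gamma_ge hν m) hfac.le

lemma descFactorial_mul_factorial (m j : ℕ) :
    ((m + j).descFactorial j : ℕ) * m.factorial = (m + j).factorial := by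
  rw [Nat.descFactorial_eq_div (by omega : j ≤ m + j), show m + j - j = m by omega]
  exact Nat.div_mul_cancel (Nat.factorial_dvd_factorial (Nat.le_add_right m j))

lemma abs_d_le (hν : 0 < ν) (j m : ℕ) :
    |d ν j m| ≤ 1 / (Real.Gamma (ν + 1) * m.factorial) := by
  have hg1 : 0 < Real.Gamma (ν + 1) := Real.Gamma_pos_of_pos (by positivity)
  have h1 : |d ν j m| = ((m + j).descFactorial j : ℝ) * |a ν (m + j)| := by
    rw [d, abs_mul, abs_of_nonneg (by positivity)]
  rw [h1]
  have h2 := abs_a_le hν (m + j)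
  have hdf : (0:ℝ) ≤ ((m + j).descFactorial j : ℝ) := by positivity
  calc ((m + j).descFactorial j : ℝ) * |a ν (m + j)|
      ≤ ((m + j).descFactorial j : ℝ) *
        (1 / (((m+j).factorial : ℝ) * (m+j).factorial * Real.Gamma (ν + 1))) :=
        mul_le_mul_of_nonneg_left h2 hdf
    _ ≤ 1 / (Real.Gamma (ν + 1) * m.factorial) := by
        have hkey : ((m + j).descFactorial j : ℝ) * m.factorial = (m+j).factorial := by
          rw [← Nat.cast_mul, descFactorial_mul_factorial]
        have hf1 : (1:ℝ) ≤ (m+j).factorial := by exact_mod_cast Nat.one_le_iff_ne_zero.mpr (Nat.factorial_ne_zero _)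
        have hfm : (0:ℝ) < m.factorial := by positivity
        have hfmj : (0:ℝ) < (m+j).factorial := by positivity
        have h5 : ((m + j).descFactorial j : ℝ) *
            (1 / (((m+j).factorial : ℝ) * (m+j).factorial * Real.Gamma (ν + 1)))
            = 1 / ((m.factorial : ℝ) * (m+j).factorial * Real.Gamma (ν + 1)) := by
          rw [mul_one_div, div_eq_div_iff (by positivity) (by positivity)]
          linear_combination (((m+j).factorial : ℝ) * Real.Gamma (ν + 1)) * hkey
        rw [h5]
        apply one_div_le_one_div_of_le (by positivity)
        nlinarith [mul_pos hfm hg1]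


lemma summable_G (hν : 0 < ν) (j : ℕ) (t : ℝ) : Summable (fun m => d ν j m * t ^ m) := by
  have hg1 : 0 < Real.Gamma (ν + 1) := Real.Gamma_pos_of_pos (by positivity)
  apply Summable.of_norm_bounded
    (g := fun m => (1 / Real.Gamma (ν + 1)) * (|t| ^ m / m.factorial))
  · exact (Real.summable_pow_div_factorial |t|).mul_left _
  · intro m
    rw [norm_mul, norm_pow, Real.norm_eq_abs, Real.norm_eq_abs]
    calc |d ν j m| * |t| ^ m ≤ (1 / (Real.Gamma (ν + 1) * m.factorial)) * |t| ^ m := by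
          apply mul_le_mul_of_nonneg_right (abs_d_le hν j m) (by positivity)
      _ = (1 / Real.Gamma (ν + 1)) * (|t| ^ m / m.factorial) := by
          field_simp

lemma summable_G_deriv (hν : 0 < ν) (j : ℕ) {R : ℝ} (hR : 1 ≤ R) :
    Summable (fun m : ℕ => (1 / Real.Gamma (ν + 1)) * ((2 * R) ^ m / m.factorial)) :=
  (Real.summable_pow_div_factorial (2 * R)).mul_left _

lemma deriv_term_bound (hν : 0 < ν) (j : ℕ) {R : ℝ} (hR : 1 ≤ R) (m : ℕ) {y : ℝ}
    (hy : |y| ≤ R) :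
    |d ν j m * (m * y ^ (m - 1))| ≤ (1 / Real.Gamma (ν + 1)) * ((2 * R) ^ m / m.factorial) := by
  have hg1 : 0 < Real.Gamma (ν + 1) := Real.Gamma_pos_of_pos (by positivity)
  have hR0 : 0 ≤ R := by linarith
  have h1 : |d ν j m * (m * y ^ (m - 1))| ≤
      (1 / (Real.Gamma (ν + 1) * m.factorial)) * (m * R ^ (m-1)) := by
    rw [abs_mul, abs_mul, abs_pow, Nat.abs_cast]
    apply mul_le_mul (abs_d_le hν j m)
    · exact mul_le_mul_of_nonneg_left (pow_le_pow_left₀ (abs_nonneg y) hy _) (by positivity)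
    · positivity
    · positivity
  refine h1.trans ?_
  have h2 : (m : ℝ) * R ^ (m - 1) ≤ (2 * R) ^ m := by
    calc (m : ℝ) * R ^ (m - 1) ≤ 2 ^ m * R ^ m := by
          apply mul_le_mul
          · exact_mod_cast (Nat.lt_two_pow_self (n := m)).le
          · exact pow_le_pow_right₀ hR (by omega)
          · positivity
          · positivity
      _ = (2 * R) ^ m := by rw [mul_pow]
  calc (1 / (Real.Gamma (ν + 1) * m.factorial)) * (m * R ^ (m-1))
      ≤ (1 / (Real.Gamma (ν + 1) * m.factorial)) * (2*R) ^ m := by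
        exact mul_le_mul_of_nonneg_left h2 (by positivity)
    _ = (1 / Real.Gamma (ν + 1)) * ((2 * R) ^ m / m.factorial) := by
        field_simp

lemma a_recurrence (hν : 0 < ν) (m : ℕ) :
    ((m:ℝ) + 1) * (ν + m + 1) * a ν (m + 1) = - a ν m := by
  have hg : 0 < Real.Gamma (ν + m + 1) := Real.Gamma_pos_of_pos (by positivity)
  have hgam : Real.Gamma (ν + (m+1 : ℕ) + 1) = (ν + m + 1) * Real.Gamma (ν + m + 1) := by
    rw [show ν + ((m+1 : ℕ) : ℝ) + 1 = (ν + m + 1) + 1 by push_cast; ring]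
    exact Real.Gamma_add_one (by positivity)
  have hfac : ((m+1 : ℕ).factorial : ℝ) = ((m:ℝ)+1) * m.factorial := by
    rw [Nat.factorial_succ]; push_cast; ring
  have hf0 : ((m.factorial : ℝ)) ≠ 0 := by positivity
  rw [a, a, hgam, hfac, pow_succ]
  field_simp

lemma d_shift (m j : ℕ) : ((m:ℝ) + 1) * d ν j (m + 1) = d ν (j+1) m := by
  rw [d, d, show m + (j+1) = (m + 1) + j by ring]
  have : ((m + 1 + j).descFactorial (j+1) : ℝ) = ((m:ℝ)+1) * ((m + 1 + j).descFactorial j) := by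
    rw [Nat.descFactorial_succ, show m + 1 + j - j = m + 1 by omega]
    push_cast; ring
  rw [this]; ring

lemma hasDerivAt_G (hν : 0 < ν) (j : ℕ) (t : ℝ) :
    HasDerivAt (G ν j) (G ν (j+1) t) t := by
  have hR : (1:ℝ) ≤ |t| + 1 := by linarith [abs_nonneg t]
  set R := |t| + 1 with hRdef
  have htmem : t ∈ Metric.ball (0:ℝ) R := by
    rw [Metric.mem_ball, Real.dist_eq, sub_zero]; linarith
  have h0mem : (0:ℝ) ∈ Metric.ball (0:ℝ) R := Metric.mem_ball_self (by linarith)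
  have key : HasDerivAt (G ν j) (∑' m : ℕ, d ν j m * (m * t ^ (m-1))) t := by
    apply hasDerivAt_tsum_of_isPreconnected
      (u := fun m : ℕ => (1 / Real.Gamma (ν + 1)) * ((2 * R) ^ m / m.factorial))
      (summable_G_deriv hν j hR) Metric.isOpen_ball
      ((convex_ball (0:ℝ) R).isPreconnected)
      (fun m y _ => (hasDerivAt_pow m y).const_mul (d ν j m))
      (fun m y hy => ?_) h0mem (summable_G hν j 0) htmem
    have hyR : |y| ≤ R := by
      rw [Metric.mem_ball, Real.dist_eq, sub_zero] at hy; linarith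
    simpa only [Real.norm_eq_abs] using deriv_term_bound hν j hR m hyR
  convert key using 1
  have hsum : Summable (fun m : ℕ => d ν j m * (m * t ^ (m-1))) := by
    apply Summable.of_norm_bounded
      (g := fun m : ℕ => (1 / Real.Gamma (ν + 1)) * ((2 * R) ^ m / m.factorial))
      (summable_G_deriv hν j hR)
    intro m
    exact deriv_term_bound hν j hR m (by linarith : |t| ≤ R)
  rw [G, Summable.tsum_eq_zero_add hsum]
  simp only [Nat.cast_zero, zero_mul, mul_zero, zero_add]
  apply tsum_congr
  intro m
  have h1 : d ν j (m+1) * (((m:ℝ)+1) * t ^ m) = (((m:ℝ)+1) * d ν j (m+1)) * t ^ m := by ring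
  rw [show ((m+1 : ℕ):ℝ) = (m:ℝ)+1 by push_cast; ring, show (m+1) - 1 = m by omega, h1, d_shift]

lemma contDiff_G (hν : 0 < ν) (N : ℕ) (j : ℕ) : ContDiff ℝ N (G ν j) := by
  induction N generalizing j with
  | zero =>
    have : Differentiable ℝ (G ν j) := fun t => (hasDerivAt_G hν j t).differentiableAt
    have h0 : ContDiff ℝ (0:ℕ∞) (G ν j) := contDiff_zero.mpr this.continuous
    exact_mod_cast h0
  | succ N ih =>
    rw [show ((N+1:ℕ) : WithTop ℕ∞) = (N : WithTop ℕ∞) + 1 by push_cast; rfl,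
      contDiff_succ_iff_deriv]
    refine ⟨fun t => (hasDerivAt_G hν j t).differentiableAt, ?_, ?_⟩
    · intro h; simp at h
    · have hder : deriv (G ν j) = G ν (j+1) := by
        ext t; exact (hasDerivAt_G hν j t).deriv
      rw [hder]; exact ih (j+1)

lemma d_zero_eq (M : ℕ) : d ν 0 M = a ν M := by simp [d]

lemma G_ODE (hν : 0 < ν) (t : ℝ) :
    t * G ν 2 t + (ν + 1) * G ν 1 t + G ν 0 t = 0 := by
  have hs1 := summable_G hν 1 t
  have hs0 := summable_G hν 0 t
  have hf : Summable (fun m : ℕ => if m = 0 then 0 else d ν 2 (m-1) * t ^ m) := by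
    rw [← summable_nat_add_iff 1]
    simp only [Nat.add_sub_cancel, if_neg (Nat.succ_ne_zero _)]
    exact ((summable_G hν 2 t).mul_right t).congr (fun m => by rw [pow_succ]; ring)
  have ht2 : t * G ν 2 t = ∑' m : ℕ, (if m = 0 then 0 else d ν 2 (m-1) * t ^ m) := by
    have h1 : ∀ m : ℕ, t * (d ν 2 m * t ^ m) = d ν 2 m * t ^ (m+1) := fun m => by
      rw [pow_succ]; ring
    calc t * G ν 2 t = ∑' m : ℕ, d ν 2 m * t ^ (m+1) := by
          rw [G, ← tsum_mul_left]; exact tsum_congr h1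
      _ = ∑' m : ℕ, (if m = 0 then 0 else d ν 2 (m-1) * t ^ m) := by
          rw [Summable.tsum_eq_zero_add hf]; simp
  have hB : Summable (fun m : ℕ => (ν+1) * (d ν 1 m * t ^ m)) := hs1.mul_left _
  rw [ht2, G, G, ← tsum_mul_left, ← Summable.tsum_add hf hB, ← Summable.tsum_add (hf.add hB) hs0]
  convert tsum_zero with m
  rcases m with _ | m
  · have h1 : d ν 1 0 = a ν 1 := by simp [d]
    have hrec := a_recurrence hν 0
    push_cast at hrec
    simp [h1, d_zero_eq]
    linarith
  · rw [if_neg (Nat.succ_ne_zero _), Nat.add_sub_cancel]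
    have e1 : d ν 1 (m+1) = (((m:ℝ)+1)+1) * a ν (m+2) := by
      have := d_shift (ν := ν) (m+1) 0
      rw [d_zero_eq] at this
      rw [← this]
      push_cast; ring_nf
    have e2 : d ν 2 m = ((m:ℝ)+1) * d ν 1 (m+1) := (d_shift m 1).symm
    have hrec := a_recurrence hν (m+1)
    push_cast at hrec
    rw [d_zero_eq, e2, e1]
    push_cast
    linear_combination t^(m+1) * hrec



lemma G_zero_eq (hν : 0 < ν) (t : ℝ) : G ν 0 t = ∑' m : ℕ, a ν m * t ^ m :=
  tsum_congr fun m => by rw [d_zero_eq]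

/-- the function H i, with J^(i)(x) = (x/2)^(ν-i) * H i x -/
noncomputable def H (ν : ℝ) : ℕ → ℝ → ℝ
  | 0 => fun x => G ν 0 (x^2/4)
  | (i+1) => fun x => (ν - i)/2 * H ν i x + x/2 * deriv (H ν i) x

lemma contDiff_H (hν : 0 < ν) (i : ℕ) : ∀ N : ℕ, ContDiff ℝ N (H ν i) := by
  induction i with
  | zero =>
    intro N
    exact (contDiff_G hν N 0).comp ((contDiff_id.pow 2).div_const 4)
  | succ i ih =>
    intro N
    show ContDiff ℝ N (fun x => (ν - i)/2 * H ν i x + x/2 * deriv (H ν i) x)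
    have h1 : ContDiff ℝ (N+1 : ℕ) (H ν i) := ih (N+1)
    rw [show (((N+1):ℕ) : WithTop ℕ∞) = (N : WithTop ℕ∞) + 1 by push_cast; rfl,
      contDiff_succ_iff_deriv] at h1
    exact ((contDiff_const.mul (ih N)).add ((contDiff_id.div_const 2).mul h1.2.2))

lemma hasDerivAt_H (hν : 0 < ν) (i : ℕ) (x : ℝ) :
    HasDerivAt (H ν i) (deriv (H ν i) x) x := by
  have h1 : ContDiff ℝ (1:ℕ) (H ν i) := contDiff_H hν i 1
  exact (h1.differentiable (by norm_num)).differentiableAt.hasDerivAt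

/-- J family -/
noncomputable def Jf (ν : ℝ) (i : ℕ) (x : ℝ) : ℝ := (x/2) ^ (ν - i) * H ν i x

lemma hasDerivAt_Jf (hν : 0 < ν) (i : ℕ) {x : ℝ} (hx : 0 < x) :
    HasDerivAt (Jf ν i) (Jf ν (i+1) x) x := by
  have hx2 : 0 < x/2 := by linarith
  have hA : HasDerivAt (fun y : ℝ => (y/2) ^ (ν - i))
      ((ν - i) * (x/2) ^ (ν - i - 1) * (1/2)) x := by
    have hpow := Real.hasDerivAt_rpow_const (x := x/2) (p := ν - i) (Or.inl (ne_of_gt hx2))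
    have hdiv : HasDerivAt (fun y : ℝ => y/2) (1/2) x := (hasDerivAt_id x).div_const 2
    exact hpow.comp x hdiv
  have hH := hasDerivAt_H hν i x
  have key := hA.mul hH
  have hre : (ν - i) * (x/2) ^ (ν - i - 1) * (1/2) * H ν i x
      + (x/2) ^ (ν - i) * deriv (H ν i) x = Jf ν (i+1) x := by
    rw [Jf, show H ν (i+1) x = (ν - i)/2 * H ν i x + x/2 * deriv (H ν i) x from rfl]
    have h2 : (x/2) ^ (ν - i) = (x/2) ^ (ν - (i+1:ℕ)) * (x/2) := by
      rw [← Real.rpow_add_one (ne_of_gt hx2)]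
      congr 1; push_cast; ring
    have h3 : (x/2) ^ (ν - i - 1) = (x/2) ^ (ν - (i+1:ℕ)) := by
      congr 1; push_cast; ring
    rw [h2, h3]; ring
  rw [← hre]; exact key

lemma besselJ_eq (hν : 0 < ν) {x : ℝ} (hx : 0 < x) :
    besselJ ν x = Jf ν 0 x := by
  rw [besselJ, Jf, show H ν 0 x = G ν 0 (x^2/4) from rfl, G_zero_eq hν]
  have hx2 : 0 < x/2 := by linarith
  rw [← tsum_mul_left]
  apply tsum_congr
  intro m
  rw [a]
  have hA : (x/2) ^ ((2:ℝ) * m) = (x^2/4) ^ m := by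
    rw [show (2:ℝ) * m = ((2*m : ℕ) : ℝ) by push_cast; ring, Real.rpow_natCast, pow_mul]
    congr 1
    ring
  have h1 : (x/2) ^ (2 * (m:ℝ) + ν) = (x/2) ^ (ν - (0:ℕ)) * (x^2/4) ^ m := by
    rw [Real.rpow_add hx2, hA, show ((0:ℕ):ℝ) = 0 by norm_num, sub_zero, mul_comm]
  rw [h1]; ring

/-- key general lemma: iterated deriv determined by a derivative family on an open set -/
lemma iteratedDeriv_eq_of_family {s : Set ℝ} (hs : IsOpen s) {F : ℝ → ℝ} {f : ℕ → ℝ → ℝ}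
    (h0 : ∀ x ∈ s, F x = f 0 x) (hd : ∀ i, ∀ x ∈ s, HasDerivAt (f i) (f (i+1) x) x) :
    ∀ k, ∀ x ∈ s, iteratedDeriv k F x = f k x := by
  intro k
  induction k with
  | zero => intro x hx; rw [iteratedDeriv_zero]; exact h0 x hx
  | succ k ih =>
    intro x hx
    rw [iteratedDeriv_succ]
    have hev : iteratedDeriv k F =ᶠ[nhds x] f k :=
      Filter.eventuallyEq_of_mem (hs.mem_nhds hx) ih
    rw [hev.deriv_eq]
    exact (hd k x hx).deriv

lemma iteratedDeriv_besselJ (hν : 0 < ν) (i : ℕ) {x : ℝ} (hx : 0 < x) :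
    iteratedDeriv i (besselJ ν) x = Jf ν i x :=
  iteratedDeriv_eq_of_family isOpen_Ioi (fun y hy => besselJ_eq hν hy)
    (fun j y hy => hasDerivAt_Jf hν j hy) i x hx

lemma H_one_eq (hν : 0 < ν) (x : ℝ) :
    H ν 1 x = ν/2 * G ν 0 (x^2/4) + x^2/4 * G ν 1 (x^2/4) := by
  show (ν - (0:ℕ))/2 * H ν 0 x + x/2 * deriv (H ν 0) x = _
  have hder : deriv (H ν 0) x = G ν 1 (x^2/4) * (x/2) := by
    have hc : HasDerivAt (fun y : ℝ => y^2/4) (x/2) x := by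
      have := ((hasDerivAt_pow 2 x).div_const 4)
      refine this.congr_deriv ?_
      push_cast; ring
    exact ((hasDerivAt_G hν 0 (x^2/4)).comp x hc).deriv
  rw [hder]
  show (ν - (0:ℕ))/2 * G ν 0 (x^2/4) + x/2 * (G ν 1 (x^2/4) * (x/2)) = _
  push_cast
  ring

lemma H_two_eq (hν : 0 < ν) (x : ℝ) :
    H ν 2 x = (ν-1)/2 * H ν 1 x
      + x/2 * ((ν/2) * (G ν 1 (x^2/4) * (x/2)) + ((x/2) * G ν 1 (x^2/4)
        + x^2/4 * (G ν 2 (x^2/4) * (x/2)))) := by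
  show (ν - (1:ℕ))/2 * H ν 1 x + x/2 * deriv (H ν 1) x = _
  have hc : HasDerivAt (fun y : ℝ => y^2/4) (x/2) x := by
    have := ((hasDerivAt_pow 2 x).div_const 4)
    refine this.congr_deriv ?_
    push_cast; ring
  have hder : deriv (H ν 1) x = (ν/2) * (G ν 1 (x^2/4) * (x/2)) + ((x/2) * G ν 1 (x^2/4)
      + x^2/4 * (G ν 2 (x^2/4) * (x/2))) := by
    have hfun : H ν 1 = fun x => ν/2 * G ν 0 (x^2/4) + x^2/4 * G ν 1 (x^2/4) := by
      ext y; exact H_one_eq hν y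
    rw [hfun]
    have h1 : HasDerivAt (fun y : ℝ => ν/2 * G ν 0 (y^2/4)) ((ν/2) * (G ν 1 (x^2/4) * (x/2))) x :=
      ((hasDerivAt_G hν 0 (x^2/4)).comp x hc).const_mul _
    have h2 : HasDerivAt (fun y : ℝ => y^2/4 * G ν 1 (y^2/4))
        ((x/2) * G ν 1 (x^2/4) + x^2/4 * (G ν 2 (x^2/4) * (x/2))) x :=
      hc.fun_mul (((hasDerivAt_G hν 1 (x^2/4)).comp x hc :))
    exact (h1.fun_add h2).deriv
  rw [hder]
  norm_num

lemma H_ODE (hν : 0 < ν) (x : ℝ) :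
    4 * H ν 2 x + 2 * H ν 1 x + (x^2 - ν^2) * H ν 0 x = 0 := by
  have hODE := G_ODE hν (x^2/4)
  have h0 : H ν 0 x = G ν 0 (x^2/4) := rfl
  rw [H_two_eq hν, H_one_eq hν, h0]
  linear_combination (x^2) * hODE

lemma bessel_ODE (hν : 0 < ν) {x : ℝ} (hx : 0 < x) :
    x^2 * Jf ν 2 x + x * Jf ν 1 x + (x^2 - ν^2) * Jf ν 0 x = 0 := by
  have hx2 : 0 < x/2 := by linarith
  have e2 : (x/2) ^ (ν - (2:ℕ)) = (x/2)^ν / (x/2)^2 := by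
    rw [show (ν - (2:ℕ) : ℝ) = ν - (2:ℝ) by push_cast; ring, Real.rpow_sub hx2]
    norm_num [Real.rpow_natCast]
  have e1 : (x/2) ^ (ν - (1:ℕ)) = (x/2)^ν / (x/2) := by
    rw [show (ν - (1:ℕ) : ℝ) = ν - (1:ℝ) by push_cast; ring, Real.rpow_sub hx2, Real.rpow_one]
  have e0 : (x/2) ^ (ν - (0:ℕ)) = (x/2)^ν := by norm_num
  have hH := H_ODE hν x
  have hne : (x:ℝ) ≠ 0 := ne_of_gt hx
  have t1 : x^2 * ((x/2)^ν/(x/2)^2 * H ν 2 x) = (x/2)^ν * (4 * H ν 2 x) := by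
    field_simp; ring
  have t2 : x * ((x/2)^ν/(x/2) * H ν 1 x) = (x/2)^ν * (2 * H ν 1 x) := by
    field_simp
  rw [Jf, Jf, Jf, e2, e1, e0, t1, t2]
  linear_combination ((x/2)^ν) * hH


lemma Jf_def (ν : ℝ) (i : ℕ) (x : ℝ) : Jf ν i x = (x/2) ^ (ν - i) * H ν i x := rfl

noncomputable def w (ν : ℝ) (x : ℝ) : ℝ := x ^ ((1:ℝ)/2) * Jf ν 0 x
noncomputable def W1 (ν : ℝ) (x : ℝ) : ℝ :=
  (1/2) * x ^ (-(1:ℝ)/2) * Jf ν 0 x + x ^ ((1:ℝ)/2) * Jf ν 1 x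
noncomputable def W2 (ν : ℝ) (x : ℝ) : ℝ :=
  -(1/4) * x ^ (-(3:ℝ)/2) * Jf ν 0 x + x ^ (-(1:ℝ)/2) * Jf ν 1 x + x ^ ((1:ℝ)/2) * Jf ν 2 x
noncomputable def qq (ν : ℝ) (x : ℝ) : ℝ := 1 - (ν^2 - 1/4)/x^2
noncomputable def EE (ν : ℝ) (x : ℝ) : ℝ := (W1 ν x)^2 / qq ν x + (w ν x)^2

lemma rpow_hd {p : ℝ} {x : ℝ} (hx : 0 < x) :
    HasDerivAt (fun y : ℝ => y ^ p) (p * x ^ (p - 1)) x :=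
  Real.hasDerivAt_rpow_const (Or.inl (ne_of_gt hx))

lemma hasDerivAt_w (hν : 0 < ν) {x : ℝ} (hx : 0 < x) :
    HasDerivAt (w ν) (W1 ν x) x := by
  have h := (rpow_hd (p := (1:ℝ)/2) hx).fun_mul (hasDerivAt_Jf hν 0 hx)
  refine h.congr_deriv ?_
  rw [W1, show (1:ℝ)/2 - 1 = -(1:ℝ)/2 by norm_num]
  try ring

lemma hasDerivAt_W1 (hν : 0 < ν) {x : ℝ} (hx : 0 < x) :
    HasDerivAt (W1 ν) (W2 ν x) x := by
  have h1 := ((rpow_hd (p := -(1:ℝ)/2) hx).fun_mul (hasDerivAt_Jf hν 0 hx)).const_mul (1/2 : ℝ)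
  have h2 := (rpow_hd (p := (1:ℝ)/2) hx).fun_mul (hasDerivAt_Jf hν 1 hx)
  have h := h1.fun_add h2
  have hfun : W1 ν = fun y => (1/2 : ℝ) * (y ^ (-(1:ℝ)/2) * Jf ν 0 y)
      + y ^ ((1:ℝ)/2) * Jf ν 1 y := by
    funext y; rw [W1]; ring
  rw [hfun]
  refine h.congr_deriv ?_
  rw [W2, show -(1:ℝ)/2 - 1 = -(3:ℝ)/2 by norm_num,
    show (1:ℝ)/2 - 1 = -(1:ℝ)/2 by norm_num]
  try ring

lemma W2_eq (hν : 0 < ν) {x : ℝ} (hx : 0 < x) :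
    W2 ν x = -(qq ν x) * w ν x := by
  have hODE := bessel_ODE hν hx
  have hne : x ≠ 0 := ne_of_gt hx
  have e1m : x ^ (-(1:ℝ)/2) * x = x ^ ((1:ℝ)/2) := by
    nth_rewrite 2 [← Real.rpow_one x]
    rw [← Real.rpow_add hx]
    norm_num
  have e3m : x ^ (-(3:ℝ)/2) * x^2 = x ^ ((1:ℝ)/2) := by
    rw [← Real.rpow_natCast x 2, ← Real.rpow_add hx]
    norm_num
  have hx2 : (x^2:ℝ) ≠ 0 := pow_ne_zero 2 hne
  have K : x^2 * W2 ν x + (x^2 - (ν^2 - 1/4)) * w ν x = 0 := by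
    rw [W2, w]
    linear_combination (x ^ ((1:ℝ)/2)) * hODE + (Jf ν 1 x * x) * e1m
      + (-(1/4) * Jf ν 0 x) * e3m
  rw [qq]
  have h2 : -(1 - (ν^2 - 1/4)/x^2) * w ν x = (-(x^2 - (ν^2 - 1/4)) * w ν x)/x^2 := by
    field_simp
    try ring
    try exact Or.inl trivial
  rw [h2, eq_div_iff hx2]
  linear_combination K

lemma qq_pos (hν : 0 < ν) {x : ℝ} (hx : ν + 1 ≤ x) : 0 < qq ν x := by
  have hx0 : 0 < x := by linarith
  rw [qq]
  have h1 : ν^2 - 1/4 < x^2 := by nlinarith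
  have h2 : (ν^2 - 1/4)/x^2 < 1 := by
    rw [div_lt_one (by positivity)]; linarith
  linarith

lemma qq_le_one (hν : (1:ℝ)/2 ≤ ν) {x : ℝ} (hx : 0 < x) : qq ν x ≤ 1 := by
  rw [qq]
  have : 0 ≤ (ν^2 - 1/4)/x^2 := by
    apply div_nonneg _ (by positivity)
    nlinarith
  linarith

lemma hasDerivAt_EE (hν : 0 < ν) {x : ℝ} (hx : ν + 1 ≤ x) :
    HasDerivAt (EE ν) (-(W1 ν x)^2 * (2*(ν^2 - 1/4)/x^3) / (qq ν x)^2) x := by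
  have hx0 : 0 < x := by linarith
  have hq := qq_pos hν hx
  have hqd : HasDerivAt (qq ν) (2*(ν^2 - 1/4)/x^3) x := by
    have h1 : HasDerivAt (fun y : ℝ => y^2) (2*x) x := by
      simpa using hasDerivAt_pow 2 x
    have h2 := (h1.inv (by positivity)).const_mul (ν^2 - 1/4)
    have h3 := (hasDerivAt_const x (1:ℝ)).sub h2
    have hqfun : qq ν = fun y : ℝ => (1:ℝ) - (ν^2 - 1/4) * (y^2)⁻¹ := by
      funext y; rw [qq]; ring
    rw [hqfun]
    refine h3.congr_deriv ?_
    field_simp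
    ring
  have hW1d := hasDerivAt_W1 hν hx0
  have hwd := hasDerivAt_w hν hx0
  have hd := (((hW1d.fun_mul hW1d).fun_div hqd (ne_of_gt hq))).fun_add (hwd.fun_mul hwd)
  have hEfun : EE ν = fun y => (W1 ν y * W1 ν y) / qq ν y + w ν y * w ν y := by
    funext y; rw [EE]; ring
  rw [hEfun]
  refine hd.congr_deriv ?_
  rw [W2_eq hν hx0]
  field_simp
  ring

lemma nupos (hν : (1:ℝ)/2 ≤ ν) : 0 < ν := by linarith

lemma antitone_EE (hν : (1:ℝ)/2 ≤ ν) : AntitoneOn (EE ν) (Ici (ν + 1)) := by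
  have h0 : 0 < ν := nupos hν
  apply antitoneOn_of_deriv_nonpos (convex_Ici _)
  · intro x hx
    exact (hasDerivAt_EE h0 hx).continuousAt.continuousWithinAt
  · intro x hx
    rw [interior_Ici] at hx
    exact (hasDerivAt_EE h0 (le_of_lt hx)).differentiableAt.differentiableWithinAt
  · intro x hx
    rw [interior_Ici] at hx
    rw [(hasDerivAt_EE h0 (le_of_lt hx)).deriv]
    have hx0 : (0:ℝ) < x := by have := mem_Ioi.mp hx; linarith
    have hx3 : (0:ℝ) < x^3 := by positivity
    have hnum : 0 ≤ 2*(ν^2 - 1/4)/x^3 := by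
      apply div_nonneg _ hx3.le
      nlinarith
    have hq2 : (0:ℝ) < (qq ν x)^2 := by
      have := qq_pos h0 (le_of_lt hx)
      positivity
    apply div_nonpos_of_nonpos_of_nonneg _ hq2.le
    apply mul_nonpos_of_nonpos_of_nonneg _ hnum
    exact neg_nonpos.mpr (sq_nonneg _)

lemma EE_nonneg (hν : (1:ℝ)/2 ≤ ν) {x : ℝ} (hx : ν + 1 ≤ x) : 0 ≤ EE ν x := by
  have h0 : 0 < ν := nupos hν
  have hq := qq_pos h0 hx
  rw [EE]
  positivity

lemma w_sq_le (hν : (1:ℝ)/2 ≤ ν) {x : ℝ} (hx : ν + 1 ≤ x) :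
    (w ν x)^2 ≤ EE ν (ν + 1) := by
  have h0 : 0 < ν := nupos hν
  have hq := qq_pos h0 hx
  have h1 : (w ν x)^2 ≤ EE ν x := by
    rw [EE]
    have : 0 ≤ (W1 ν x)^2 / qq ν x := by positivity
    linarith
  exact h1.trans (antitone_EE hν (self_mem_Ici) hx hx)

lemma W1_sq_le (hν : (1:ℝ)/2 ≤ ν) {x : ℝ} (hx : ν + 1 ≤ x) :
    (W1 ν x)^2 ≤ EE ν (ν + 1) := by
  have h0 : 0 < ν := nupos hν
  have hq := qq_pos h0 hx
  have hx0 : (0:ℝ) < x := by linarith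
  have hq1 := qq_le_one hν hx0
  have h1 : (W1 ν x)^2 / qq ν x ≤ EE ν x := by
    rw [EE]; nlinarith [sq_nonneg (w ν x)]
  have h2 : (W1 ν x)^2 ≤ (W1 ν x)^2 / qq ν x := by
    rw [le_div_iff₀ hq]
    nlinarith [sq_nonneg (W1 ν x)]
  linarith [antitone_EE hν (self_mem_Ici) hx hx]

/-- final bound for Jf 0 and Jf 1 at infinity -/
lemma Jf01_bound (hν : (1:ℝ)/2 ≤ ν) :
    ∃ B > 0, ∀ x, ν + 1 ≤ x → |Jf ν 0 x| ≤ B ∧ |Jf ν 1 x| ≤ B := by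
  have h0 : 0 < ν := nupos hν
  set E0 := EE ν (ν + 1) with hE0
  have hE0nn : 0 ≤ E0 := EE_nonneg hν le_rfl
  refine ⟨2 * Real.sqrt E0 + 1, by positivity, ?_⟩
  intro x hx
  have hx0 : (0:ℝ) < x := by linarith
  have hx1 : (1:ℝ) ≤ x := by linarith
  have hwb : |w ν x| ≤ Real.sqrt E0 := by
    rw [← Real.sqrt_sq_eq_abs]
    exact Real.sqrt_le_sqrt (w_sq_le hν hx)
  have hW1b : |W1 ν x| ≤ Real.sqrt E0 := by
    rw [← Real.sqrt_sq_eq_abs]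
    exact Real.sqrt_le_sqrt (W1_sq_le hν hx)
  have hxh : (1:ℝ) ≤ x ^ ((1:ℝ)/2) := Real.one_le_rpow hx1 (by norm_num)
  have hxh0 : (0:ℝ) < x ^ ((1:ℝ)/2) := by linarith
  have hxnh : x ^ (-(1:ℝ)/2) ≤ 1 := by
    rw [show -(1:ℝ)/2 = -((1:ℝ)/2) by norm_num, Real.rpow_neg hx0.le]
    rw [inv_le_one_iff₀]
    right; exact hxh
  have hxnh0 : 0 < x ^ (-(1:ℝ)/2) := Real.rpow_pos_of_pos hx0 _
  have hJ0 : |Jf ν 0 x| ≤ Real.sqrt E0 := by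
    have heq : Jf ν 0 x = w ν x / x ^ ((1:ℝ)/2) := by
      rw [w, mul_comm, mul_div_assoc, div_self (ne_of_gt hxh0), mul_one]
    rw [heq, abs_div, abs_of_pos hxh0]
    calc |w ν x| / x ^ ((1:ℝ)/2) ≤ |w ν x| / 1 := by
          apply div_le_div_of_nonneg_left (abs_nonneg _) one_pos hxh
      _ = |w ν x| := div_one _
      _ ≤ Real.sqrt E0 := hwb
  constructor
  · linarith [Real.sqrt_nonneg E0]
  · have hkey : x ^ ((1:ℝ)/2) * Jf ν 1 x
        = W1 ν x - (1/2) * x ^ (-(1:ℝ)/2) * Jf ν 0 x := by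
      rw [W1]; ring
    have h5 : |x ^ ((1:ℝ)/2) * Jf ν 1 x| ≤ Real.sqrt E0 + (1/2) * Real.sqrt E0 := by
      rw [hkey]
      refine (abs_sub _ _).trans ?_
      have h6 : |(1/2) * x ^ (-(1:ℝ)/2) * Jf ν 0 x| ≤ (1/2) * Real.sqrt E0 := by
        rw [abs_mul, abs_mul, abs_of_pos (by norm_num : (0:ℝ) < 1/2), abs_of_pos hxnh0]
        calc 1/2 * x ^ (-(1:ℝ)/2) * |Jf ν 0 x| ≤ 1/2 * 1 * Real.sqrt E0 := by
              apply mul_le_mul _ hJ0 (abs_nonneg _) (by norm_num)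
              nlinarith
          _ = (1/2) * Real.sqrt E0 := by ring
      linarith [hW1b]
    have h7 : |Jf ν 1 x| ≤ |x ^ ((1:ℝ)/2) * Jf ν 1 x| := by
      rw [abs_mul, abs_of_pos hxh0]
      exact le_mul_of_one_le_left (abs_nonneg _) hxh
    nlinarith [Real.sqrt_nonneg E0]

noncomputable def PQ (ν : ℝ) : ℕ → Polynomial ℝ × Polynomial ℝ
  | 0 => (1, 0)
  | i+1 => (-(X^2) * (PQ ν i).1.derivative + (C (ν^2) * X^2 - 1) * (PQ ν i).2,
            (PQ ν i).1 - X^2 * (PQ ν i).2.derivative - X * (PQ ν i).2)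

lemma Jf_two_eq (hν : 0 < ν) {x : ℝ} (hx : 0 < x) :
    Jf ν 2 x = -(x⁻¹) * Jf ν 1 x - (1 - ν^2 * (x⁻¹)^2) * Jf ν 0 x := by
  have h := bessel_ODE hν hx
  have hne : x ≠ 0 := ne_of_gt hx
  have h2 : Jf ν 2 x = (-(x * Jf ν 1 x) - (x^2-ν^2) * Jf ν 0 x)/x^2 := by
    rw [eq_div_iff (pow_ne_zero 2 hne)]; linear_combination h
  rw [h2]
  field_simp

lemma Jf_eq_PQ (hν : 0 < ν) (i : ℕ) :
    ∀ x : ℝ, 0 < x → Jf ν i x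
      = (PQ ν i).1.eval x⁻¹ * Jf ν 0 x + (PQ ν i).2.eval x⁻¹ * Jf ν 1 x := by
  induction i with
  | zero => intro x hx; simp [PQ]
  | succ i ih =>
    intro x hx
    have hne : x ≠ 0 := ne_of_gt hx
    have hev : Jf ν i =ᶠ[nhds x] fun y =>
        (PQ ν i).1.eval y⁻¹ * Jf ν 0 y + (PQ ν i).2.eval y⁻¹ * Jf ν 1 y := by
      apply Filter.eventuallyEq_of_mem (isOpen_Ioi.mem_nhds (mem_Ioi.mpr hx))
      intro y hy
      exact ih y hy
    have hderiv1 : deriv (Jf ν i) x = Jf ν (i+1) x := (hasDerivAt_Jf hν i hx).deriv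
    -- derivative of the RHS
    have hinv : HasDerivAt (fun y : ℝ => y⁻¹) (-(x^2)⁻¹) x := hasDerivAt_inv hne
    have hP : HasDerivAt (fun y : ℝ => (PQ ν i).1.eval y⁻¹)
        (((PQ ν i).1.derivative.eval x⁻¹) * -(x^2)⁻¹) x :=
      HasDerivAt.comp x ((PQ ν i).1.hasDerivAt x⁻¹) hinv
    have hQ : HasDerivAt (fun y : ℝ => (PQ ν i).2.eval y⁻¹)
        (((PQ ν i).2.derivative.eval x⁻¹) * -(x^2)⁻¹) x :=
      HasDerivAt.comp x ((PQ ν i).2.hasDerivAt x⁻¹) hinv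
    have hrhs := (hP.mul (hasDerivAt_Jf hν 0 hx)).add (hQ.mul (hasDerivAt_Jf hν 1 hx))
    calc Jf ν (i+1) x = deriv (Jf ν i) x := hderiv1.symm
      _ = ((PQ ν i).1.derivative.eval x⁻¹) * -(x^2)⁻¹ * Jf ν 0 x
            + (PQ ν i).1.eval x⁻¹ * Jf ν 1 x
            + (((PQ ν i).2.derivative.eval x⁻¹) * -(x^2)⁻¹ * Jf ν 1 x
            + (PQ ν i).2.eval x⁻¹ * Jf ν 2 x) := by
          rw [hev.deriv_eq]; exact hrhs.deriv
      _ = (PQ ν (i+1)).1.eval x⁻¹ * Jf ν 0 x + (PQ ν (i+1)).2.eval x⁻¹ * Jf ν 1 x := by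
          rw [Jf_two_eq hν hx]
          show _ = (-(X^2) * (PQ ν i).1.derivative
              + (C (ν^2) * X^2 - 1) * (PQ ν i).2).eval x⁻¹ * Jf ν 0 x
            + ((PQ ν i).1 - X^2 * (PQ ν i).2.derivative - X * (PQ ν i).2).eval x⁻¹ * Jf ν 1 x
          simp only [Polynomial.eval_add, Polynomial.eval_mul, Polynomial.eval_sub,
            Polynomial.eval_neg, Polynomial.eval_pow, Polynomial.eval_X, Polynomial.eval_C,
            Polynomial.eval_one]
          rw [show (x⁻¹)^2 = (x^2)⁻¹ by rw [inv_pow]]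
          ring

lemma poly_eval_bound (p : Polynomial ℝ) : ∃ Cp ≥ 0, ∀ t : ℝ, |t| ≤ 1 → |p.eval t| ≤ Cp := by
  refine ⟨∑ j ∈ Finset.range (p.natDegree + 1), |p.coeff j|, by positivity, ?_⟩
  intro t ht
  rw [Polynomial.eval_eq_sum_range]
  refine (Finset.abs_sum_le_sum_abs _ _).trans (Finset.sum_le_sum fun j _ => ?_)
  rw [abs_mul, abs_pow]
  calc |p.coeff j| * |t| ^ j ≤ |p.coeff j| * 1 := by
        apply mul_le_mul_of_nonneg_left (pow_le_one₀ (abs_nonneg t) ht) (abs_nonneg _)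
    _ = |p.coeff j| := mul_one _

lemma Jf_large_bound (hν : (1:ℝ)/2 ≤ ν) (i : ℕ) :
    ∃ Cl > 0, ∀ x : ℝ, ν + 1 ≤ x → |Jf ν i x| ≤ Cl := by
  have h0 : 0 < ν := by linarith
  obtain ⟨B, hB0, hB⟩ := Jf01_bound hν
  obtain ⟨Cp, hCp0, hCp⟩ := poly_eval_bound (PQ ν i).1
  obtain ⟨Cq, hCq0, hCq⟩ := poly_eval_bound (PQ ν i).2
  refine ⟨Cp * B + Cq * B + 1, by positivity, ?_⟩
  intro x hx
  have hx1 : (1:ℝ) < x := by linarith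
  have hinv : |x⁻¹| ≤ 1 := by
    rw [abs_inv, abs_of_pos (by linarith : (0:ℝ) < x)]
    rw [inv_le_one_iff₀]
    right; linarith
  obtain ⟨h0b, h1b⟩ := hB x hx
  rw [Jf_eq_PQ h0 i x (by linarith)]
  calc |(PQ ν i).1.eval x⁻¹ * Jf ν 0 x + (PQ ν i).2.eval x⁻¹ * Jf ν 1 x|
      ≤ |(PQ ν i).1.eval x⁻¹| * |Jf ν 0 x| + |(PQ ν i).2.eval x⁻¹| * |Jf ν 1 x| := by
        refine (abs_add_le _ _).trans ?_
        rw [abs_mul, abs_mul]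
    _ ≤ Cp * B + Cq * B := by
        gcongr
        · exact hCp x⁻¹ hinv
        · exact hCq x⁻¹ hinv
    _ ≤ Cp * B + Cq * B + 1 := by linarith

lemma Jf_small_bound (hν : 0 < ν) (i : ℕ) {T : ℝ} (hT : 0 < T) :
    ∃ Cs > 0, ∀ x : ℝ, 0 < x → x ≤ T → |Jf ν i x| ≤ Cs * x ^ (ν - i) := by
  have hcont : ContinuousOn (H ν i) (Icc 0 T) :=
    ((contDiff_H hν i 0).continuous).continuousOn
  obtain ⟨M, hM⟩ := (isCompact_Icc (a := (0:ℝ)) (b := T)).exists_bound_of_continuousOn hcont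
  have hM0 : 0 ≤ M := le_trans (norm_nonneg _) (hM 0 ⟨le_rfl, hT.le⟩)
  set p := ν - (i:ℝ) with hp
  refine ⟨M / 2 ^ p + 1, by positivity, ?_⟩
  intro x hx hxT
  have hx2 : (0:ℝ) < x/2 := by linarith
  rw [Jf_def]
  have h2p : (0:ℝ) < 2 ^ p := Real.rpow_pos_of_pos (by norm_num) _
  have hxp : (0:ℝ) < x ^ p := Real.rpow_pos_of_pos hx _
  have hdiv : (x/2) ^ p = x ^ p / 2 ^ p := Real.div_rpow hx.le (by norm_num : (0:ℝ) ≤ 2) p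
  rw [abs_mul, hdiv, abs_of_pos (by positivity : (0:ℝ) < x ^ p / 2 ^ p)]
  have hHb : |H ν i x| ≤ M := by
    have := hM x ⟨hx.le, hxT⟩
    rwa [Real.norm_eq_abs] at this
  calc x ^ p / 2 ^ p * |H ν i x| ≤ x ^ p / 2 ^ p * M := by
        exact mul_le_mul_of_nonneg_left hHb (by positivity)
    _ = M / 2 ^ p * x ^ p := by ring
    _ ≤ (M / 2 ^ p + 1) * x ^ p := by nlinarith

lemma key_bound (hν : (1:ℝ)/2 ≤ ν) {μ : ℝ} (hμ0 : 0 < μ) (hμν : μ ≤ ν) (i : ℕ) :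
    ∃ C > 0, ∀ lam r : ℝ, 0 < lam → lam ≤ 1 → 0 < r →
      r ^ (i:ℝ) * |Jf ν i (lam * r)| ≤ C * lam ^ (μ - i) * r ^ μ * (1+r) ^ (i:ℝ) := by
  have h0 : 0 < ν := by linarith
  set T : ℝ := ν + 1 with hTdef
  have hT0 : 0 < T := by linarith
  have hT1 : (1:ℝ) ≤ T := by linarith
  obtain ⟨Cs, hCs0, hCs⟩ := Jf_small_bound h0 i hT0
  obtain ⟨Cl, hCl0, hCl⟩ := Jf_large_bound hν i
  have hTp : 0 < T ^ (ν - μ) := Real.rpow_pos_of_pos hT0 _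
  refine ⟨Cs * T ^ (ν - μ) + Cl, by positivity, ?_⟩
  intro lam r hlam0 hlam1 hr0
  set x := lam * r with hxdef
  have hx0 : 0 < x := by positivity
  have h1r : (1:ℝ) ≤ 1 + r := by linarith
  have hone : (1:ℝ) ≤ (1+r) ^ (i:ℝ) := Real.one_le_rpow h1r (by positivity)
  have hrμ : (0:ℝ) < r ^ μ := Real.rpow_pos_of_pos hr0 _
  have hlamμi : (0:ℝ) < lam ^ (μ - i) := Real.rpow_pos_of_pos hlam0 _
  have hri : (0:ℝ) < r ^ (i:ℝ) := Real.rpow_pos_of_pos hr0 _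
  rcases le_or_gt x T with hxT | hxT
  · -- small regime
    have hb := hCs x hx0 hxT
    have e1 : x ^ (ν - i) = lam ^ (ν - i) * r ^ (ν - i) := Real.mul_rpow hlam0.le hr0.le
    have e2 : r ^ (i:ℝ) * r ^ (ν - i) = r ^ ν := by
      rw [← Real.rpow_add hr0]; congr 1; ring
    have step1 : r ^ (i:ℝ) * |Jf ν i x| ≤ Cs * lam ^ (ν - i) * r ^ ν := by
      calc r ^ (i:ℝ) * |Jf ν i x| ≤ r ^ (i:ℝ) * (Cs * x ^ (ν - i)) :=
            mul_le_mul_of_nonneg_left hb hri.le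
        _ = Cs * lam ^ (ν - i) * r ^ ν := by rw [e1, ← e2]; ring
    have step2 : Cs * lam ^ (ν - i) * r ^ ν ≤ Cs * T ^ (ν - μ) * lam ^ (μ - i) * r ^ μ := by
      have e3 : lam ^ (ν - i) = lam ^ (μ - i) * lam ^ (ν - μ) := by
        rw [← Real.rpow_add hlam0]; congr 1; ring
      have e4 : r ^ ν = r ^ μ * r ^ (ν - μ) := by
        rw [← Real.rpow_add hr0]; congr 1; ring
      have e5 : lam ^ (ν - μ) * r ^ (ν - μ) = x ^ (ν - μ) := (Real.mul_rpow hlam0.le hr0.le).symm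
      have e6 : x ^ (ν - μ) ≤ T ^ (ν - μ) := Real.rpow_le_rpow hx0.le hxT (by linarith)
      calc Cs * lam ^ (ν - i) * r ^ ν
          = Cs * (lam ^ (μ - i) * r ^ μ) * (lam ^ (ν - μ) * r ^ (ν - μ)) := by
            rw [e3, e4]; ring
        _ = Cs * (lam ^ (μ - i) * r ^ μ) * x ^ (ν - μ) := by rw [e5]
        _ ≤ Cs * (lam ^ (μ - i) * r ^ μ) * T ^ (ν - μ) := by
            apply mul_le_mul_of_nonneg_left e6 (by positivity)
        _ = Cs * T ^ (ν - μ) * lam ^ (μ - i) * r ^ μ := by ring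
    calc r ^ (i:ℝ) * |Jf ν i x| ≤ Cs * T ^ (ν - μ) * lam ^ (μ - i) * r ^ μ := step1.trans step2
      _ = (Cs * T ^ (ν - μ)) * lam ^ (μ - i) * r ^ μ * 1 := by ring
      _ ≤ (Cs * T ^ (ν - μ) + Cl) * lam ^ (μ - i) * r ^ μ * (1+r) ^ (i:ℝ) := by
          gcongr
          linarith
  · -- large regime
    have hb := hCl x (by linarith)
    have hJnn : 0 ≤ |Jf ν i x| := abs_nonneg _
    have main : r ^ (i:ℝ) ≤ lam ^ (μ - i) * r ^ μ * (1+r) ^ (i:ℝ) := by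
      rcases le_or_gt μ (i:ℝ) with hcase | hcase
      · have hl1 : (1:ℝ) ≤ lam ^ (μ - i) := by
          have := Real.rpow_le_rpow_of_exponent_ge hlam0 hlam1 (by linarith : μ - i ≤ 0)
          rwa [Real.rpow_zero] at this
        have hr1 : r ^ (i:ℝ) = r ^ μ * r ^ ((i:ℝ) - μ) := by
          rw [← Real.rpow_add hr0]; congr 1; ring
        have hr2 : r ^ ((i:ℝ) - μ) ≤ (1+r) ^ ((i:ℝ) - μ) :=
          Real.rpow_le_rpow hr0.le (by linarith) (by linarith)
        have hr3 : (1+r) ^ ((i:ℝ) - μ) ≤ (1+r) ^ (i:ℝ) :=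
          Real.rpow_le_rpow_of_exponent_le h1r (by linarith)
        calc r ^ (i:ℝ) = r ^ μ * r ^ ((i:ℝ) - μ) := hr1
          _ ≤ r ^ μ * (1+r) ^ (i:ℝ) := by
              apply mul_le_mul_of_nonneg_left (hr2.trans hr3) hrμ.le
          _ = 1 * (r ^ μ * (1+r) ^ (i:ℝ)) := by ring
          _ ≤ lam ^ (μ - i) * r ^ μ * (1+r) ^ (i:ℝ) := by
              rw [show lam ^ (μ - i) * r ^ μ * (1+r) ^ (i:ℝ)
                = lam ^ (μ - i) * (r ^ μ * (1+r) ^ (i:ℝ)) by ring]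
              apply mul_le_mul_of_nonneg_right hl1 (by positivity)
      · have h1 : (1:ℝ) ≤ T ^ (μ - i) := Real.one_le_rpow hT1 (by linarith)
        have h2 : T ^ (μ - i) ≤ x ^ (μ - i) :=
          Real.rpow_le_rpow hT0.le hxT.le (by linarith)
        have h3 : x ^ (μ - i) = lam ^ (μ - i) * r ^ (μ - i) := Real.mul_rpow hlam0.le hr0.le
        have h4 : (1:ℝ) ≤ lam ^ (μ - i) * r ^ (μ - i) := by rw [← h3]; exact h1.trans h2
        have h5 : r ^ (i:ℝ) * (lam ^ (μ - i) * r ^ (μ - i)) = lam ^ (μ - i) * r ^ μ := by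
          rw [show r ^ (i:ℝ) * (lam ^ (μ - i) * r ^ (μ - i))
            = lam ^ (μ - i) * (r ^ (i:ℝ) * r ^ (μ - i)) by ring, ← Real.rpow_add hr0]
          congr 2; ring
        calc r ^ (i:ℝ) = r ^ (i:ℝ) * 1 := (mul_one _).symm
          _ ≤ r ^ (i:ℝ) * (lam ^ (μ - i) * r ^ (μ - i)) :=
              mul_le_mul_of_nonneg_left h4 hri.le
          _ = lam ^ (μ - i) * r ^ μ * 1 := by rw [h5]; ring
          _ ≤ lam ^ (μ - i) * r ^ μ * (1+r) ^ (i:ℝ) := by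
              apply mul_le_mul_of_nonneg_left hone (by positivity)
    calc r ^ (i:ℝ) * |Jf ν i x| ≤ r ^ (i:ℝ) * Cl := mul_le_mul_of_nonneg_left hb hri.le
      _ = Cl * r ^ (i:ℝ) := by ring
      _ ≤ Cl * (lam ^ (μ - i) * r ^ μ * (1+r) ^ (i:ℝ)) := by
          apply mul_le_mul_of_nonneg_left main hCl0.le
      _ = Cl * lam ^ (μ - i) * r ^ μ * (1+r) ^ (i:ℝ) := by ring
      _ ≤ (Cs * T ^ (ν - μ) + Cl) * lam ^ (μ - i) * r ^ μ * (1+r) ^ (i:ℝ) := by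
          gcongr
          nlinarith

lemma pascal_sum (i : ℕ) (A : ℕ → ℕ → ℝ) :
    ∑ j ∈ Finset.range (i+1), (i.choose j : ℝ) * (A (j+1) (i-j) + A j (i-j+1))
      = ∑ j ∈ Finset.range (i+2), ((i+1).choose j : ℝ) * A j (i+1-j) := by
  have hR := Finset.sum_range_succ' (fun j => ((i+1).choose j : ℝ) * A j (i+1-j)) (i+1)
  have hG := Finset.sum_range_succ' (fun j => (i.choose j : ℝ) * A j (i+1-j)) (i+1)
  have hGtop := Finset.sum_range_succ (fun j => (i.choose j : ℝ) * A j (i+1-j)) (i+1)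
  rw [hR]
  have e1 : ∀ j ∈ Finset.range (i+1), ((i+1).choose (j+1) : ℝ) * A (j+1) (i+1-(j+1))
      = (i.choose j : ℝ) * A (j+1) (i-j) + (i.choose (j+1) : ℝ) * A (j+1) (i-j) := by
    intro j hj
    rw [Nat.choose_succ_succ]
    push_cast
    simp only [Nat.succ_eq_add_one]
    try rw [show i+1-(j+1) = i-j by omega]
    ring
  rw [Finset.sum_congr rfl e1, Finset.sum_add_distrib]
  have e2 : (∑ j ∈ Finset.range (i+1), (i.choose (j+1) : ℝ) * A (j+1) (i-j))
      + ((i+1).choose 0 : ℝ) * A 0 (i+1-0)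
      = ∑ j ∈ Finset.range (i+1), (i.choose j : ℝ) * A j (i+1-j) := by
    have e3 : ∀ j ∈ Finset.range (i+1), (i.choose (j+1) : ℝ) * A (j+1) (i-j)
        = (fun j => (i.choose j : ℝ) * A j (i+1-j)) (j+1) := by
      intro j hj
      simp only []
      rw [show i+1-(j+1) = i-j by omega]
    simp only [Nat.choose_zero_right, Nat.cast_one, one_mul] at hG
    rw [Finset.sum_congr rfl e3]
    simp only [Nat.choose_zero_right, Nat.cast_one, one_mul, Nat.choose_self]
    rw [← hG, hGtop]
    simp [Nat.choose_succ_self]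
  rw [add_assoc, e2]
  have e4 : ∀ j ∈ Finset.range (i+1), (i.choose j : ℝ) * (A (j+1) (i-j) + A j (i-j+1))
      = (i.choose j : ℝ) * A (j+1) (i-j) + (i.choose j : ℝ) * A j (i+1-j) := by
    intro j hj
    have hji := Finset.mem_range.mp hj
    rw [show i-j+1 = i+1-j by omega]
    ring
  rw [Finset.sum_congr rfl e4, Finset.sum_add_distrib]

section Master
variable {ν : ℝ} {μ : ℝ}

/-- the scaled derivative families -/
noncomputable def uu (ν : ℝ) (r : ℝ) (i : ℕ) (l : ℝ) : ℝ := r ^ i * Jf ν i (l * r)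

lemma hasDerivAt_uu (hν : 0 < ν) {r : ℝ} (hr : 0 < r) (i : ℕ) {l : ℝ} (hl : 0 < l) :
    HasDerivAt (uu ν r i) (uu ν r (i+1) l) l := by
  have hlr : 0 < l * r := by positivity
  have hc : HasDerivAt (fun y : ℝ => y * r) r l := by simpa using (hasDerivAt_id l).mul_const r
  have h1 : HasDerivAt (fun y : ℝ => Jf ν i (y * r)) (Jf ν (i+1) (l*r) * r) l :=
    HasDerivAt.comp l (hasDerivAt_Jf hν i hlr) hc
  have h2 := h1.const_mul (r ^ i)
  refine h2.congr_deriv ?_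
  rw [uu, pow_succ]
  ring

/-- Leibniz family for the product -/
noncomputable def ff (ν : ℝ) (μ : ℝ) (r s : ℝ) (i : ℕ) (l : ℝ) : ℝ :=
  (r * s) ^ (-μ) * ∑ j ∈ Finset.range (i+1),
    (i.choose j : ℝ) * (uu ν r j l * uu ν s (i-j) l)

lemma hasDerivAt_ff (hν : 0 < ν) {r s : ℝ} (hr : 0 < r) (hs : 0 < s) (i : ℕ)
    {l : ℝ} (hl : 0 < l) : HasDerivAt (ff ν μ r s i) (ff ν μ r s (i+1) l) l := by
  have hsum : HasDerivAt (fun y => ∑ j ∈ Finset.range (i+1),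
      (i.choose j : ℝ) * (uu ν r j y * uu ν s (i-j) y))
      (∑ j ∈ Finset.range (i+1), (i.choose j : ℝ) *
        (uu ν r (j+1) l * uu ν s (i-j) l + uu ν r j l * uu ν s (i-j+1) l)) l := by
    apply HasDerivAt.fun_sum
    intro j hj
    have h := ((hasDerivAt_uu hν hr j hl).fun_mul (hasDerivAt_uu hν hs (i-j) hl)).const_mul
      ((i.choose j : ℝ))
    refine h.congr_deriv ?_
    try ring
  have h2 := hsum.const_mul ((r*s) ^ (-μ))
  have hval : (r*s) ^ (-μ) * ∑ j ∈ Finset.range (i+1), (i.choose j : ℝ) *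
      (uu ν r (j+1) l * uu ν s (i-j) l + uu ν r j l * uu ν s (i-j+1) l)
      = ff ν μ r s (i+1) l := by
    rw [ff, pascal_sum i (fun p q => uu ν r p l * uu ν s q l)]
  exact hval ▸ h2

lemma iteratedDeriv_F (hν : 0 < ν) {r s : ℝ} (hr : 0 < r) (hs : 0 < s) (k : ℕ)
    {lam : ℝ} (hlam : 0 < lam) :
    iteratedDeriv k
      (fun l : ℝ => (r * s) ^ (-μ) * (besselJ ν (l * r) * besselJ ν (l * s))) lam
      = ff ν μ r s k lam := by
  apply iteratedDeriv_eq_of_family isOpen_Ioi _ _ k lam (mem_Ioi.mpr hlam)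
  · intro x hx
    rw [mem_Ioi] at hx
    show (r * s) ^ (-μ) * (besselJ ν (x * r) * besselJ ν (x * s)) = _
    rw [besselJ_eq hν (by positivity : (0:ℝ) < x * r),
      besselJ_eq hν (by positivity : (0:ℝ) < x * s)]
    simp [ff, uu, Finset.sum_range_one]
  · intro i x hx
    exact hasDerivAt_ff hν hr hs i (mem_Ioi.mp hx)

lemma master_bound (hν : (1:ℝ)/2 ≤ ν) (hμ0 : 0 < μ) (hμν : μ ≤ ν) (k : ℕ) :
    ∃ CC > 0, ∀ lam r s : ℝ, 0 < lam → lam ≤ 1 → 0 < r → 0 < s →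
      |iteratedDeriv k
        (fun l : ℝ => (r * s) ^ (-μ) * (besselJ ν (l * r) * besselJ ν (l * s))) lam|
      ≤ CC * lam ^ (2*μ - k) * (1+r) ^ (k:ℝ) * (1+s) ^ (k:ℝ) := by
  have h0 : 0 < ν := by linarith
  choose Cf hCf0 hCfb using key_bound hν hμ0 hμν
  refine ⟨∑ j ∈ Finset.range (k+1), (k.choose j : ℝ) * (Cf j * Cf (k-j)), ?_, ?_⟩
  · apply Finset.sum_pos
    · intro j hj
      have h1 : 0 < (k.choose j : ℝ) := by
        have := Nat.choose_pos (Nat.lt_succ_iff.mp (Finset.mem_range.mp hj))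
        exact_mod_cast this
      have := hCf0 j
      have := hCf0 (k-j)
      positivity
    · exact ⟨0, Finset.mem_range.mpr (Nat.succ_pos k)⟩
  intro lam r s hlam0 hlam1 hr hs
  rw [iteratedDeriv_F h0 hr hs k hlam0, ff]
  set D : ℝ := lam ^ (2*μ - k) * ((1+r) ^ (k:ℝ) * (1+s) ^ (k:ℝ)) with hD
  have hD0 : 0 ≤ D := by
    have h1 : (0:ℝ) < lam ^ (2*μ - k) := Real.rpow_pos_of_pos hlam0 _
    have h2 : (0:ℝ) < (1+r) ^ (k:ℝ) := Real.rpow_pos_of_pos (by linarith) _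
    have h3 : (0:ℝ) < (1+s) ^ (k:ℝ) := Real.rpow_pos_of_pos (by linarith) _
    positivity
  have hc0 : (r*s) ^ (-μ) = r ^ (-μ) * s ^ (-μ) := Real.mul_rpow hr.le hs.le
  have hrμ : r ^ (-μ) * r ^ μ = 1 := by
    rw [← Real.rpow_add hr]; simp
  have hsμ : s ^ (-μ) * s ^ μ = 1 := by
    rw [← Real.rpow_add hs]; simp
  -- termwise bound
  have hterm : ∀ j ∈ Finset.range (k+1),
      |uu ν r j lam * uu ν s (k-j) lam| ≤ (Cf j * Cf (k-j)) * (r ^ μ * s ^ μ * D) := by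
    intro j hj
    have hjk : j ≤ k := Nat.lt_succ_iff.mp (Finset.mem_range.mp hj)
    have hu : |uu ν r j lam| ≤ Cf j * lam ^ (μ - j) * r ^ μ * (1+r) ^ (k:ℝ) := by
      have hb := hCfb j lam r hlam0 hlam1 hr
      have he : |uu ν r j lam| = r ^ (j:ℝ) * |Jf ν j (lam * r)| := by
        rw [uu, abs_mul, abs_of_pos (by positivity : (0:ℝ) < r ^ j), ← Real.rpow_natCast r j]
      rw [he]
      refine hb.trans ?_
      have hmono : (1+r) ^ (j:ℝ) ≤ (1+r) ^ (k:ℝ) :=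
        Real.rpow_le_rpow_of_exponent_le (by linarith) (by exact_mod_cast hjk)
      have hCfj := hCf0 j
      have h1 : (0:ℝ) < lam ^ (μ - j) := Real.rpow_pos_of_pos hlam0 _
      have h2 : (0:ℝ) < r ^ μ := Real.rpow_pos_of_pos hr _
      gcongr
    have hv : |uu ν s (k-j) lam| ≤ Cf (k-j) * lam ^ (μ - ((k-j:ℕ):ℝ)) * s ^ μ * (1+s) ^ (k:ℝ) := by
      have hb := hCfb (k-j) lam s hlam0 hlam1 hs
      have he : |uu ν s (k-j) lam| = s ^ ((k-j:ℕ):ℝ) * |Jf ν (k-j) (lam * s)| := by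
        rw [uu, abs_mul, abs_of_pos (by positivity : (0:ℝ) < s ^ (k-j)),
          ← Real.rpow_natCast s (k-j)]
      rw [he]
      refine hb.trans ?_
      have hmono : (1+s) ^ ((k-j:ℕ):ℝ) ≤ (1+s) ^ (k:ℝ) := by
        apply Real.rpow_le_rpow_of_exponent_le (by linarith)
        exact_mod_cast Nat.sub_le k j
      have h1 : (0:ℝ) < lam ^ (μ - ((k-j:ℕ):ℝ)) := Real.rpow_pos_of_pos hlam0 _
      have h2 : (0:ℝ) < s ^ μ := Real.rpow_pos_of_pos hs _
      have hCfkj := hCf0 (k-j)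
      gcongr
    have hlamsum : lam ^ (μ - j) * lam ^ (μ - ((k-j:ℕ):ℝ)) = lam ^ (2*μ - k) := by
      rw [← Real.rpow_add hlam0]
      congr 1
      rw [Nat.cast_sub hjk]; ring
    rw [abs_mul]
    calc |uu ν r j lam| * |uu ν s (k-j) lam|
        ≤ (Cf j * lam ^ (μ - j) * r ^ μ * (1+r) ^ (k:ℝ))
          * (Cf (k-j) * lam ^ (μ - ((k-j:ℕ):ℝ)) * s ^ μ * (1+s) ^ (k:ℝ)) := by
          apply mul_le_mul hu hv (abs_nonneg _)
          have hCfj := hCf0 j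
          have h1 : (0:ℝ) < lam ^ (μ - j) := Real.rpow_pos_of_pos hlam0 _
          have h2 : (0:ℝ) < r ^ μ := Real.rpow_pos_of_pos hr _
          have h3 : (0:ℝ) < (1+r) ^ (k:ℝ) := Real.rpow_pos_of_pos (by linarith) _
          positivity
      _ = (Cf j * Cf (k-j)) * (r ^ μ * s ^ μ * ((lam ^ (μ - j) * lam ^ (μ - ((k-j:ℕ):ℝ)))
            * ((1+r) ^ (k:ℝ) * (1+s) ^ (k:ℝ)))) := by ring
      _ = (Cf j * Cf (k-j)) * (r ^ μ * s ^ μ * D) := by rw [hlamsum, hD]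
  -- assemble
  have hrs0 : (0:ℝ) ≤ (r*s) ^ (-μ) := Real.rpow_nonneg (by positivity) _
  calc |(r * s) ^ (-μ) * ∑ j ∈ Finset.range (k+1),
        (k.choose j : ℝ) * (uu ν r j lam * uu ν s (k-j) lam)|
      = (r*s) ^ (-μ) * |∑ j ∈ Finset.range (k+1),
        (k.choose j : ℝ) * (uu ν r j lam * uu ν s (k-j) lam)| := by
        rw [abs_mul, abs_of_nonneg hrs0]
    _ ≤ (r*s) ^ (-μ) * ∑ j ∈ Finset.range (k+1),
        (k.choose j : ℝ) * |uu ν r j lam * uu ν s (k-j) lam| := by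
        apply mul_le_mul_of_nonneg_left _ hrs0
        refine (Finset.abs_sum_le_sum_abs _ _).trans ?_
        apply Finset.sum_le_sum
        intro j hj
        rw [abs_mul, Nat.abs_cast]
    _ ≤ (r*s) ^ (-μ) * ∑ j ∈ Finset.range (k+1),
        (k.choose j : ℝ) * ((Cf j * Cf (k-j)) * (r ^ μ * s ^ μ * D)) := by
        apply mul_le_mul_of_nonneg_left _ hrs0
        apply Finset.sum_le_sum
        intro j hj
        exact mul_le_mul_of_nonneg_left (hterm j hj) (by positivity)
    _ = (∑ j ∈ Finset.range (k+1), (k.choose j : ℝ) * (Cf j * Cf (k-j)))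
        * ((r*s) ^ (-μ) * (r ^ μ * s ^ μ)) * D := by
        have e7 : ∀ j ∈ Finset.range (k+1), (k.choose j : ℝ)
            * ((Cf j * Cf (k-j)) * (r ^ μ * s ^ μ * D))
            = ((k.choose j : ℝ) * (Cf j * Cf (k-j))) * (r ^ μ * s ^ μ * D) := by
          intro j hj; ring
        rw [Finset.sum_congr rfl e7, ← Finset.sum_mul]
        ring
    _ = (∑ j ∈ Finset.range (k+1), (k.choose j : ℝ) * (Cf j * Cf (k-j)))
        * lam ^ (2*μ - k) * (1+r) ^ (k:ℝ) * (1+s) ^ (k:ℝ) := by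
        rw [hc0, show r ^ (-μ) * s ^ (-μ) * (r ^ μ * s ^ μ)
          = (r ^ (-μ) * r ^ μ) * (s ^ (-μ) * s ^ μ) by ring, hrμ, hsμ, hD]
        ring

end Master



end BesselProof

lemma integrable_weight {p : ℝ} (hp : p < -1) :
    IntegrableOn (fun t : ℝ => (1+t) ^ p) (Ioi (0:ℝ)) := by
  have hcont : ContinuousOn (fun t : ℝ => (1+t) ^ p) (Ici (0:ℝ)) := by
    intro t ht
    have h1 : (0:ℝ) < 1 + t := by have := mem_Ici.mp ht; linarith
    apply ContinuousAt.continuousWithinAt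
    exact (Real.continuousAt_rpow_const (1+t) p (Or.inl (ne_of_gt h1))).comp
      (by fun_prop : ContinuousAt (fun t : ℝ => 1 + t) t)
  have hsplit : Ioi (0:ℝ) = Ioc (0:ℝ) 1 ∪ Ioi (1:ℝ) := (Ioc_union_Ioi_eq_Ioi zero_le_one).symm
  rw [hsplit]
  apply MeasureTheory.IntegrableOn.union
  · exact (hcont.mono (Icc_subset_Ici_self)).integrableOn_compact isCompact_Icc
      |>.mono_set Ioc_subset_Icc_self
  · apply Integrable.mono' (integrableOn_Ioi_rpow_of_lt hp one_pos)
    · exact (hcont.mono (fun x hx => le_of_lt (lt_trans one_pos (mem_Ioi.mp hx)) :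
        Ioi (1:ℝ) ⊆ Ici 0)).aestronglyMeasurable measurableSet_Ioi
    · rw [ae_restrict_iff' measurableSet_Ioi]
      apply Filter.Eventually.of_forall
      intro t ht
      have ht1 : (1:ℝ) < t := mem_Ioi.mp ht
      have h0t : (0:ℝ) < t := lt_trans one_pos ht1
      rw [Real.norm_eq_abs, abs_of_nonneg (Real.rpow_nonneg (by linarith) p)]
      exact Real.rpow_le_rpow_of_nonpos h0t (by linarith) (by linarith)

lemma sq_rpow {x : ℝ} (hx : 0 ≤ x) (a : ℝ) : (x ^ a) ^ (2:ℕ) = x ^ (2*a) := by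
  rw [← Real.rpow_natCast (x ^ a) 2, ← Real.rpow_mul hx]
  norm_num [mul_comm]

open BesselProof in
theorem imag_resolvent_deriv_HS_bound_lowfreq
    (n : ℕ) (hn : 3 ≤ n) (ν : ℝ) (hν : ((n : ℝ) - 2) / 2 ≤ ν)
    (k : ℕ) (σ : ℝ) (hσ : (n : ℝ) / 2 + (k : ℝ) < σ) :
    ∃ C > (0 : ℝ), ∀ lam : ℝ, 0 < lam → lam ≤ 1 →
      Real.sqrt (∫ r in Ioi (0 : ℝ), ∫ s in Ioi (0 : ℝ),
          |iteratedDeriv k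
              (fun l : ℝ => (r * s) ^ (-(((n : ℝ) - 2) / 2)) *
                (besselJ ν (l * r) * besselJ ν (l * s))) lam| ^ (2 : ℕ) *
            (1 + r) ^ (-(2 * σ)) * (1 + s) ^ (-(2 * σ)) * (r * s) ^ ((n : ℝ) - 1))
        ≤ C * lam ^ ((n : ℝ) - 2 - (k : ℝ)) := by
  have hn3 : (3:ℝ) ≤ (n:ℝ) := by exact_mod_cast hn
  set μ : ℝ := ((n : ℝ) - 2) / 2 with hμdef
  have hμ0 : 0 < μ := by rw [hμdef]; linarith
  have hν2 : (1:ℝ)/2 ≤ ν := by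
    have : (1:ℝ)/2 ≤ μ := by rw [hμdef]; linarith
    linarith
  obtain ⟨CC, hCC0, hCC⟩ := master_bound hν2 hμ0 hν k
  -- the weight function
  set p : ℝ := ((n:ℝ) - 1) + 2*(k:ℝ) - 2*σ with hpdef
  have hp : p < -1 := by rw [hpdef]; linarith
  set h : ℝ → ℝ := fun t => (1+t) ^ p with hhdef
  have hInt : IntegrableOn h (Ioi (0:ℝ)) := integrable_weight hp
  have hh0 : ∀ t : ℝ, 0 < t → 0 ≤ h t := fun t ht => Real.rpow_nonneg (by linarith) _
  set Ih : ℝ := ∫ t in Ioi (0:ℝ), h t with hIhdef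
  have hIh0 : 0 ≤ Ih := setIntegral_nonneg measurableSet_Ioi (fun t ht => hh0 t (mem_Ioi.mp ht))
  refine ⟨CC * Ih + 1, by positivity, ?_⟩
  intro lam hlam0 hlam1
  set a : ℝ := 2*μ - (k:ℝ) with hadef
  have hae : a = (n:ℝ) - 2 - (k:ℝ) := by rw [hadef, hμdef]; ring
  have hla0 : 0 < lam ^ a := Real.rpow_pos_of_pos hlam0 _
  -- pointwise bound on the integrand
  have hpoint : ∀ r s : ℝ, 0 < r → 0 < s →
      |iteratedDeriv k
          (fun l : ℝ => (r * s) ^ (-μ) *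
            (besselJ ν (l * r) * besselJ ν (l * s))) lam| ^ (2 : ℕ) *
        (1 + r) ^ (-(2 * σ)) * (1 + s) ^ (-(2 * σ)) * (r * s) ^ ((n : ℝ) - 1)
        ≤ (CC^2 * lam ^ (2*a)) * (h r * h s) := by
    intro r s hr hs
    have h1r : (0:ℝ) < 1 + r := by linarith
    have h1s : (0:ℝ) < 1 + s := by linarith
    have hb := hCC lam r s hlam0 hlam1 hr hs
    have habs : (0:ℝ) ≤ |iteratedDeriv k
        (fun l : ℝ => (r * s) ^ (-μ) *
          (besselJ ν (l * r) * besselJ ν (l * s))) lam| := abs_nonneg _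
    have hsq : |iteratedDeriv k
        (fun l : ℝ => (r * s) ^ (-μ) *
          (besselJ ν (l * r) * besselJ ν (l * s))) lam| ^ (2:ℕ)
        ≤ (CC * lam ^ a * (1+r) ^ (k:ℝ) * (1+s) ^ (k:ℝ)) ^ (2:ℕ) :=
      pow_le_pow_left₀ habs hb 2
    -- weights
    have hw1 : (0:ℝ) ≤ (1 + r) ^ (-(2 * σ)) := Real.rpow_nonneg h1r.le _
    have hw2 : (0:ℝ) ≤ (1 + s) ^ (-(2 * σ)) := Real.rpow_nonneg h1s.le _
    have hw3 : (0:ℝ) ≤ (r * s) ^ ((n : ℝ) - 1) := Real.rpow_nonneg (by positivity) _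
    have step1 : |iteratedDeriv k
          (fun l : ℝ => (r * s) ^ (-μ) *
            (besselJ ν (l * r) * besselJ ν (l * s))) lam| ^ (2 : ℕ) *
        (1 + r) ^ (-(2 * σ)) * (1 + s) ^ (-(2 * σ)) * (r * s) ^ ((n : ℝ) - 1)
        ≤ (CC * lam ^ a * (1+r) ^ (k:ℝ) * (1+s) ^ (k:ℝ)) ^ (2:ℕ) *
        (1 + r) ^ (-(2 * σ)) * (1 + s) ^ (-(2 * σ)) * (r * s) ^ ((n : ℝ) - 1) := by
      gcongr
    refine step1.trans ?_
    -- now pure rpow algebra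
    have hmul : (r * s) ^ ((n : ℝ) - 1) = r ^ ((n:ℝ)-1) * s ^ ((n:ℝ)-1) :=
      Real.mul_rpow hr.le hs.le
    have hrn : r ^ ((n:ℝ)-1) ≤ (1+r) ^ ((n:ℝ)-1) :=
      Real.rpow_le_rpow hr.le (by linarith) (by linarith)
    have hsn : s ^ ((n:ℝ)-1) ≤ (1+s) ^ ((n:ℝ)-1) :=
      Real.rpow_le_rpow hs.le (by linarith) (by linarith)
    have hexp : (CC * lam ^ a * (1+r) ^ (k:ℝ) * (1+s) ^ (k:ℝ)) ^ (2:ℕ)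
        = CC^2 * lam ^ (2*a) * (1+r) ^ (2*(k:ℝ)) * (1+s) ^ (2*(k:ℝ)) := by
      rw [mul_pow, mul_pow, mul_pow, sq_rpow hlam0.le, sq_rpow h1r.le, sq_rpow h1s.le]
    rw [hexp, hmul]
    have hcomb_r : (1+r) ^ (2*(k:ℝ)) * (1 + r) ^ (-(2 * σ)) * (1+r) ^ ((n:ℝ)-1) = h r := by
      rw [hhdef, ← Real.rpow_add h1r, ← Real.rpow_add h1r]
      congr 1
      rw [hpdef]; ring
    have hcomb_s : (1+s) ^ (2*(k:ℝ)) * (1 + s) ^ (-(2 * σ)) * (1+s) ^ ((n:ℝ)-1) = h s := by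
      rw [hhdef, ← Real.rpow_add h1s, ← Real.rpow_add h1s]
      congr 1
      rw [hpdef]; ring
    have key : CC^2 * lam ^ (2*a) * (1+r) ^ (2*(k:ℝ)) * (1+s) ^ (2*(k:ℝ)) *
        (1 + r) ^ (-(2 * σ)) * (1 + s) ^ (-(2 * σ)) * (r ^ ((n:ℝ)-1) * s ^ ((n:ℝ)-1))
        ≤ CC^2 * lam ^ (2*a) * (1+r) ^ (2*(k:ℝ)) * (1+s) ^ (2*(k:ℝ)) *
        (1 + r) ^ (-(2 * σ)) * (1 + s) ^ (-(2 * σ)) *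
          ((1+r) ^ ((n:ℝ)-1) * (1+s) ^ ((n:ℝ)-1)) := by
      have hnn : (0:ℝ) ≤ CC^2 * lam ^ (2*a) * (1+r) ^ (2*(k:ℝ)) * (1+s) ^ (2*(k:ℝ)) *
          (1 + r) ^ (-(2 * σ)) * (1 + s) ^ (-(2 * σ)) := by
        have q1 := Real.rpow_nonneg hlam0.le (2*a)
        have q2 := Real.rpow_nonneg h1r.le (2*(k:ℝ))
        have q3 := Real.rpow_nonneg h1s.le (2*(k:ℝ))
        have q4 := Real.rpow_nonneg h1r.le (-(2*σ))
        have q5 := Real.rpow_nonneg h1s.le (-(2*σ))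
        positivity
      apply mul_le_mul_of_nonneg_left _ hnn
      exact mul_le_mul hrn hsn (Real.rpow_nonneg hs.le _) (Real.rpow_nonneg h1r.le _)
    refine key.trans (le_of_eq ?_)
    rw [show CC^2 * lam ^ (2*a) * (1+r) ^ (2*(k:ℝ)) * (1+s) ^ (2*(k:ℝ)) *
        (1 + r) ^ (-(2 * σ)) * (1 + s) ^ (-(2 * σ)) *
          ((1+r) ^ ((n:ℝ)-1) * (1+s) ^ ((n:ℝ)-1))
        = (CC^2 * lam ^ (2*a)) *
          (((1+r) ^ (2*(k:ℝ)) * (1 + r) ^ (-(2 * σ)) * (1+r) ^ ((n:ℝ)-1)) *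
           ((1+s) ^ (2*(k:ℝ)) * (1 + s) ^ (-(2 * σ)) * (1+s) ^ ((n:ℝ)-1))) from by ring,
      hcomb_r, hcomb_s]
  -- integrand nonnegativity
  have hnonneg : ∀ r s : ℝ, 0 < r → 0 < s →
      0 ≤ |iteratedDeriv k
          (fun l : ℝ => (r * s) ^ (-μ) *
            (besselJ ν (l * r) * besselJ ν (l * s))) lam| ^ (2 : ℕ) *
        (1 + r) ^ (-(2 * σ)) * (1 + s) ^ (-(2 * σ)) * (r * s) ^ ((n : ℝ) - 1) := by
    intro r s hr hs
    have h1r : (0:ℝ) < 1 + r := by linarith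
    have h1s : (0:ℝ) < 1 + s := by linarith
    have hw1 : (0:ℝ) ≤ (1 + r) ^ (-(2 * σ)) := Real.rpow_nonneg h1r.le _
    have hw2 : (0:ℝ) ≤ (1 + s) ^ (-(2 * σ)) := Real.rpow_nonneg h1s.le _
    have hw3 : (0:ℝ) ≤ (r * s) ^ ((n : ℝ) - 1) := Real.rpow_nonneg (by positivity) _
    positivity
  -- inner integral bound
  have hinner : ∀ r : ℝ, 0 < r →
      (∫ s in Ioi (0:ℝ),
        |iteratedDeriv k
            (fun l : ℝ => (r * s) ^ (-μ) *
              (besselJ ν (l * r) * besselJ ν (l * s))) lam| ^ (2 : ℕ) *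
          (1 + r) ^ (-(2 * σ)) * (1 + s) ^ (-(2 * σ)) * (r * s) ^ ((n : ℝ) - 1))
      ≤ (CC^2 * lam ^ (2*a) * h r) * Ih := by
    intro r hr
    have hgi : Integrable (fun s => (CC^2 * lam ^ (2*a) * h r) * h s)
        (volume.restrict (Ioi (0:ℝ))) := hInt.const_mul _
    have hle : (∫ s in Ioi (0:ℝ),
        |iteratedDeriv k
            (fun l : ℝ => (r * s) ^ (-μ) *
              (besselJ ν (l * r) * besselJ ν (l * s))) lam| ^ (2 : ℕ) *
          (1 + r) ^ (-(2 * σ)) * (1 + s) ^ (-(2 * σ)) * (r * s) ^ ((n : ℝ) - 1))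
        ≤ ∫ s in Ioi (0:ℝ), (CC^2 * lam ^ (2*a) * h r) * h s := by
      apply integral_mono_of_nonneg
      · exact (ae_restrict_iff' measurableSet_Ioi).mpr
          (Filter.Eventually.of_forall (fun s hs => hnonneg r s hr (mem_Ioi.mp hs)))
      · exact hgi
      · refine (ae_restrict_iff' measurableSet_Ioi).mpr (Filter.Eventually.of_forall ?_)
        intro s hs
        have hps := hpoint r s hr (mem_Ioi.mp hs)
        calc _ ≤ (CC^2 * lam ^ (2*a)) * (h r * h s) := hps
          _ = (CC^2 * lam ^ (2*a) * h r) * h s := by ring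
    refine hle.trans ?_
    rw [integral_const_mul]
  -- outer integral bound
  have houter : (∫ r in Ioi (0:ℝ), ∫ s in Ioi (0:ℝ),
        |iteratedDeriv k
            (fun l : ℝ => (r * s) ^ (-μ) *
              (besselJ ν (l * r) * besselJ ν (l * s))) lam| ^ (2 : ℕ) *
          (1 + r) ^ (-(2 * σ)) * (1 + s) ^ (-(2 * σ)) * (r * s) ^ ((n : ℝ) - 1))
      ≤ (CC^2 * lam ^ (2*a) * Ih) * Ih := by
    have hgi : Integrable (fun r => (CC^2 * lam ^ (2*a) * Ih) * h r)
        (volume.restrict (Ioi (0:ℝ))) := hInt.const_mul _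
    have hle : (∫ r in Ioi (0:ℝ), ∫ s in Ioi (0:ℝ),
        |iteratedDeriv k
            (fun l : ℝ => (r * s) ^ (-μ) *
              (besselJ ν (l * r) * besselJ ν (l * s))) lam| ^ (2 : ℕ) *
          (1 + r) ^ (-(2 * σ)) * (1 + s) ^ (-(2 * σ)) * (r * s) ^ ((n : ℝ) - 1))
        ≤ ∫ r in Ioi (0:ℝ), (CC^2 * lam ^ (2*a) * Ih) * h r := by
      apply integral_mono_of_nonneg
      · refine (ae_restrict_iff' measurableSet_Ioi).mpr (Filter.Eventually.of_forall ?_)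
        intro r hr
        exact setIntegral_nonneg measurableSet_Ioi
          (fun s hs => hnonneg r s (mem_Ioi.mp hr) (mem_Ioi.mp hs))
      · exact hgi
      · refine (ae_restrict_iff' measurableSet_Ioi).mpr (Filter.Eventually.of_forall ?_)
        intro r hr
        calc _ ≤ (CC^2 * lam ^ (2*a) * h r) * Ih := hinner r (mem_Ioi.mp hr)
          _ = (CC^2 * lam ^ (2*a) * Ih) * h r := by ring
    refine hle.trans ?_
    rw [integral_const_mul, ← hIhdef]
  -- conclude with sqrt
  have hsqeq : (CC^2 * lam ^ (2*a) * Ih) * Ih = (CC * lam ^ a * Ih)^(2:ℕ) := by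
    have h2 : (lam ^ a)^(2:ℕ) = lam ^ (2*a) := sq_rpow hlam0.le a
    rw [← h2]; ring
  calc Real.sqrt (∫ r in Ioi (0:ℝ), ∫ s in Ioi (0:ℝ),
        |iteratedDeriv k
            (fun l : ℝ => (r * s) ^ (-μ) *
              (besselJ ν (l * r) * besselJ ν (l * s))) lam| ^ (2 : ℕ) *
          (1 + r) ^ (-(2 * σ)) * (1 + s) ^ (-(2 * σ)) * (r * s) ^ ((n : ℝ) - 1))
      ≤ Real.sqrt ((CC^2 * lam ^ (2*a) * Ih) * Ih) := Real.sqrt_le_sqrt houter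
    _ = CC * lam ^ a * Ih := by
        rw [hsqeq, Real.sqrt_sq (by positivity)]
    _ ≤ (CC * Ih + 1) * lam ^ ((n:ℝ) - 2 - (k:ℝ)) := by
        rw [← hae]
        nlinarith [hla0, hIh0, hCC0]
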